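/- arXiv:1411.5260 — 2 statements merged into one kernel-verified Lean document; each statement's English description precedes it below -/
import Mathlib

section
/- Suppose conditions (C1)–(C3) hold for the piecewise linear surrogates φ⁺, φ⁻, and assume the margin condition with constants A ≥ 1 and α > 0. Then for every B > 0 there exists a constant B′ > 0 (depending on the coefficients, A, α, and B) such that for every measurable f : 𝒳 → ℝ with |f(x)| ≤ B for all x ∈ 𝒳: E₂(f) ≤ B′·(E₁(f))^{α/(1+α)}, where E₁(f) = ∫ [ p(x)·(φ⁺(f(x)) − φ⁺(t*_{p(x)})) + (1−p(x))·(φ⁻(−f(x)) − φ⁻(−t*_{p(x)})) ] dμ(x) and E₂(f) = ∫ [ p(x)·(φ⁺(f(x)) − φ⁺(t*_{p(x)}))² + (1−p(x))·(φ⁻(−f(x)) − φ⁻(−t*_{p(x)}))² ] dμ(x). (That is, the class of excess-loss functions over uniformly bounded f is a Bernstein class with exponent β = α/(1+α).) -/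
open MeasureTheory

set_option maxHeartbeats 2000000

/-- Piecewise linear surrogate `φ(z) = max{0, max_{1≤k≤K} (A_k + B_k·z)}`. -/
noncomputable def phiPL (K : ℕ) (A B : ℕ → ℝ) (z : ℝ) : ℝ :=
  (Finset.Icc 1 K).fold max 0 fun k => A k + B k * z

lemma phiPL_nonneg (K : ℕ) (A B : ℕ → ℝ) (z : ℝ) : 0 ≤ phiPL K A B z := by
  unfold phiPL
  rw [Finset.le_fold_max]
  exact Or.inl le_rfl

lemma line_le_phiPL {K : ℕ} (A B : ℕ → ℝ) (z : ℝ) {j : ℕ} (hj : j ∈ Finset.Icc 1 K) :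
    A j + B j * z ≤ phiPL K A B z := by
  unfold phiPL
  rw [Finset.le_fold_max]
  exact Or.inr ⟨j, hj, le_rfl⟩

lemma phiPL_le {K : ℕ} {A B : ℕ → ℝ} {z c : ℝ} (h0 : 0 ≤ c)
    (h : ∀ j ∈ Finset.Icc 1 K, A j + B j * z ≤ c) : phiPL K A B z ≤ c := by
  unfold phiPL
  rw [Finset.fold_max_le]
  exact ⟨h0, h⟩

lemma phiPL_continuous (K : ℕ) (A B : ℕ → ℝ) : Continuous (phiPL K A B) := by
  unfold phiPL
  induction (Finset.Icc 1 K) using Finset.cons_induction with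
  | empty => simpa using continuous_const
  | cons a s ha ih =>
    simp only [Finset.fold_cons]
    exact Continuous.max (by fun_prop) ih

lemma phiPL_anti {K : ℕ} {A B : ℕ → ℝ} (hB : ∀ j ∈ Finset.Icc 1 K, B j ≤ 0)
    {z w : ℝ} (hzw : z ≤ w) : phiPL K A B w ≤ phiPL K A B z := by
  apply phiPL_le (phiPL_nonneg K A B z)
  intro j hj
  refine le_trans ?_ (line_le_phiPL A B z hj)
  nlinarith [hB j hj]

lemma phiPL_sub_le {K : ℕ} {A B : ℕ → ℝ} {L : ℝ} (hL : ∀ j ∈ Finset.Icc 1 K, |B j| ≤ L)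
    (hL0' : 0 ≤ L) (z w : ℝ) : phiPL K A B z - phiPL K A B w ≤ L * |z - w| := by
  rw [sub_le_iff_le_add]
  have hL0 : 0 ≤ L * |z - w| := mul_nonneg hL0' (abs_nonneg _)
  apply phiPL_le (by linarith [phiPL_nonneg K A B w])
  intro j hj
  have h1 : A j + B j * z ≤ A j + B j * w + |B j| * |z - w| := by
    have : B j * z - B j * w ≤ |B j| * |z - w| := by
      calc B j * z - B j * w = B j * (z - w) := by ring
        _ ≤ |B j * (z - w)| := le_abs_self _
        _ = |B j| * |z - w| := abs_mul _ _
    linarith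
  have h2 : |B j| * |z - w| ≤ L * |z - w| := mul_le_mul_of_nonneg_right (hL j hj) (abs_nonneg _)
  linarith [line_le_phiPL A B w hj]

lemma phiPL_abs_sub_le {K : ℕ} {A B : ℕ → ℝ} {L : ℝ} (hL : ∀ j ∈ Finset.Icc 1 K, |B j| ≤ L)
    (hL0 : 0 ≤ L) (z w : ℝ) : |phiPL K A B z - phiPL K A B w| ≤ L * |z - w| := by
  rw [abs_sub_le_iff]
  constructor
  · exact phiPL_sub_le hL hL0 z w
  · rw [show |z - w| = |w - z| from abs_sub_comm z w]
    exact phiPL_sub_le hL hL0 w z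

lemma pwKey (K : ℕ) (hK : 1 ≤ K) (pp Ap Bp Am Bm H Hm : ℕ → ℝ)
    (hH0 : H 0 = Am 1 / Bm 1)
    (hHmid : ∀ k, 1 ≤ k → k ≤ K - 1 → H k = (Ap k - Ap (k + 1)) / (Bp (k + 1) - Bp k))
    (hHK : H K = -Ap K / Bp K)
    (hHm : ∀ k, 1 ≤ k → k ≤ K - 1 → Hm k = (Am k - Am (k + 1)) / (Bm (k + 1) - Bm k))
    (hC1p : ∀ k, 1 ≤ k → k < K → Bp k < Bp (k + 1)) (hC1pK : Bp K < 0)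
    (hC1m : ∀ k, 1 ≤ k → k < K → Bm (k + 1) < Bm k) (hC1m1 : Bm 1 < 0)
    (hC2a : ∀ k, 1 ≤ k → k ≤ K - 1 → -Hm k = H k)
    (hC2b : ∀ k, k < K → H k < H (k + 1))
    (hC3 : ∀ k ∈ Finset.Icc 1 K, Bm k / (Bm k + Bp k) = pp k)
    (hpp0' : pp 0 = 0) (hppK1 : pp (K + 1) = 1)
    (hpp0 : 0 < pp 1) (hppK : pp K < 1)
    (hppmono : ∀ k, 1 ≤ k → k < K → pp k < pp (k + 1))
    (tst : ℝ → ℝ)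
    (htst0 : ∀ p : ℝ, p ≤ pp 1 → tst p = H 0)
    (htstmid : ∀ p : ℝ, ∀ k, 1 ≤ k → k ≤ K - 1 → pp k < p → p ≤ pp (k + 1) → tst p = H k)
    (htstK : ∀ p : ℝ, pp K < p → tst p = H K)
    (L c : ℝ)
    (hLP : ∀ j ∈ Finset.Icc 1 K, |Bp j| ≤ L)
    (hLM : ∀ j ∈ Finset.Icc 1 K, |Bm j| ≤ L)
    (hL1 : (1:ℝ) ≤ L)
    (hcpos : 0 < c)
    (hcle : ∀ j ∈ Finset.Icc 1 K, c ≤ -(Bp j + Bm j))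

    :
    ∀ q z : ℝ, 0 ≤ q → q ≤ 1 →
      0 ≤ q * (phiPL K Ap Bp z - phiPL K Ap Bp (tst q)) +
        (1 - q) * (phiPL K Am Bm (-z) - phiPL K Am Bm (-(tst q))) ∧
      (∀ t : ℝ, 0 < t → (∀ j ∈ Finset.Icc 1 K, t < |q - pp j|) →
        q * |phiPL K Ap Bp z - phiPL K Ap Bp (tst q)| +
          (1 - q) * |phiPL K Am Bm (-z) - phiPL K Am Bm (-(tst q))| ≤
        (1 + L / (c * t)) * (q * (phiPL K Ap Bp z - phiPL K Ap Bp (tst q)) +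
          (1 - q) * (phiPL K Am Bm (-z) - phiPL K Am Bm (-(tst q))))) := by
  have Hmono : ∀ i j : ℕ, i ≤ j → j ≤ K → H i ≤ H j := by
    intro i j hij
    induction j, hij using Nat.le_induction with
    | base => intro _; exact le_rfl
    | succ n hn ih => intro hnK; exact le_trans (ih (by omega)) (le_of_lt (hC2b n (by omega)))
  have BpMono : ∀ i j : ℕ, 1 ≤ i → i ≤ j → j ≤ K → Bp i ≤ Bp j := by
    intro i j h1 hij
    induction j, hij using Nat.le_induction with
    | base => intro _; exact le_rfl
    | succ n hn ih => intro hnK; exact le_trans (ih (by omega)) (le_of_lt (hC1p n (by omega) (by omega)))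
  have BmMono : ∀ i j : ℕ, 1 ≤ i → i ≤ j → j ≤ K → Bm j ≤ Bm i := by
    intro i j h1 hij
    induction j, hij using Nat.le_induction with
    | base => intro _; exact le_rfl
    | succ n hn ih => intro hnK; exact le_trans (le_of_lt (hC1m n (by omega) (by omega))) (ih (by omega))
  have BpNeg : ∀ j, 1 ≤ j → j ≤ K → Bp j < 0 :=
    fun j h1 h2 => lt_of_le_of_lt (BpMono j K h1 h2 le_rfl) hC1pK
  have BmNeg : ∀ j, 1 ≤ j → j ≤ K → Bm j < 0 :=
    fun j h1 h2 => lt_of_le_of_lt (BmMono 1 j le_rfl h1 h2) hC1m1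
  have zeroP : Ap K + Bp K * H K = 0 := by
    have h : Bp K ≠ 0 := ne_of_lt hC1pK
    rw [hHK]; field_simp; ring
  have zeroM : Am 1 + Bm 1 * (-(H 0)) = 0 := by
    have h : Bm 1 ≠ 0 := ne_of_lt hC1m1
    rw [hH0]; field_simp; ring
  have crossP : ∀ j, 1 ≤ j → j + 1 ≤ K → Ap j + Bp j * H j = Ap (j+1) + Bp (j+1) * H j := by
    intro j h1 h2
    have hd : (0:ℝ) < Bp (j+1) - Bp j := sub_pos.2 (hC1p j h1 (by omega))
    rw [hHmid j h1 (by omega)]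
    field_simp
    ring
  have crossM : ∀ j, 1 ≤ j → j + 1 ≤ K → Am j + Bm j * (-(H j)) = Am (j+1) + Bm (j+1) * (-(H j)) := by
    intro j h1 h2
    have hd : Bm (j+1) - Bm j < 0 := sub_neg.2 (hC1m j h1 (by omega))
    rw [← hC2a j h1 (by omega), hHm j h1 (by omega)]
    have hd' : Bm (j+1) - Bm j ≠ 0 := ne_of_lt hd
    field_simp
    ring
  have stepP : ∀ (j : ℕ) (z : ℝ), 1 ≤ j → j + 1 ≤ K →
      (H j ≤ z → Ap j + Bp j * z ≤ Ap (j+1) + Bp (j+1) * z) ∧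
      (z ≤ H j → Ap (j+1) + Bp (j+1) * z ≤ Ap j + Bp j * z) := by
    intro j z h1 h2
    have hc := crossP j h1 h2
    have hd : (0:ℝ) < Bp (j+1) - Bp j := sub_pos.2 (hC1p j h1 (by omega))
    constructor
    · intro hz; nlinarith [mul_nonneg (le_of_lt hd) (sub_nonneg.2 hz)]
    · intro hz; nlinarith [mul_nonneg (le_of_lt hd) (sub_nonneg.2 hz)]
  have stepM : ∀ (j : ℕ) (z : ℝ), 1 ≤ j → j + 1 ≤ K →
      (H j ≤ z → Am j + Bm j * (-z) ≤ Am (j+1) + Bm (j+1) * (-z)) ∧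
      (z ≤ H j → Am (j+1) + Bm (j+1) * (-z) ≤ Am j + Bm j * (-z)) := by
    intro j z h1 h2
    have hc := crossM j h1 h2
    have hd : Bm (j+1) - Bm j < 0 := sub_neg.2 (hC1m j h1 (by omega))
    constructor
    · intro hz; nlinarith [mul_nonneg (le_of_lt (neg_pos.2 hd)) (sub_nonneg.2 hz)]
    · intro hz; nlinarith [mul_nonneg (le_of_lt (neg_pos.2 hd)) (sub_nonneg.2 hz)]
  have chainP_up : ∀ (z : ℝ) (j m : ℕ), 1 ≤ j → j ≤ m → m ≤ K →
      (∀ i, 1 ≤ i → i + 1 ≤ m → H i ≤ z) → Ap j + Bp j * z ≤ Ap m + Bp m * z := by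
    intro z j m h1 hjm
    induction m, hjm using Nat.le_induction with
    | base => intro _ _; exact le_rfl
    | succ n hn ih =>
      intro hnK hz
      have h3 : Ap j + Bp j * z ≤ Ap n + Bp n * z :=
        ih (by omega) (fun i hi1 hi2 => hz i hi1 (by omega))
      exact le_trans h3 ((stepP n z (by omega) (by omega)).1 (hz n (by omega) le_rfl))
  have chainP_down : ∀ (z : ℝ) (m j : ℕ), 1 ≤ m → m ≤ j → j ≤ K →
      (∀ i, m ≤ i → i + 1 ≤ K → z ≤ H i) → Ap j + Bp j * z ≤ Ap m + Bp m * z := by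
    intro z m j h1 hmj
    induction j, hmj using Nat.le_induction with
    | base => intro _ _; exact le_rfl
    | succ n hn ih =>
      intro hnK hz
      have h4 : Ap (n+1) + Bp (n+1) * z ≤ Ap n + Bp n * z :=
        (stepP n z (by omega) hnK).2 (hz n hn (by omega))
      exact le_trans h4 (ih (by omega) hz)
  have chainM_up : ∀ (z : ℝ) (j m : ℕ), 1 ≤ j → j ≤ m → m ≤ K →
      (∀ i, 1 ≤ i → i + 1 ≤ m → H i ≤ z) → Am j + Bm j * (-z) ≤ Am m + Bm m * (-z) := by
    intro z j m h1 hjm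
    induction m, hjm using Nat.le_induction with
    | base => intro _ _; exact le_rfl
    | succ n hn ih =>
      intro hnK hz
      have h3 : Am j + Bm j * (-z) ≤ Am n + Bm n * (-z) :=
        ih (by omega) (fun i hi1 hi2 => hz i hi1 (by omega))
      exact le_trans h3 ((stepM n z (by omega) (by omega)).1 (hz n (by omega) le_rfl))
  have chainM_down : ∀ (z : ℝ) (m j : ℕ), 1 ≤ m → m ≤ j → j ≤ K →
      (∀ i, m ≤ i → i + 1 ≤ K → z ≤ H i) → Am j + Bm j * (-z) ≤ Am m + Bm m * (-z) := by
    intro z m j h1 hmj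
    induction j, hmj using Nat.le_induction with
    | base => intro _ _; exact le_rfl
    | succ n hn ih =>
      intro hnK hz
      have h4 : Am (n+1) + Bm (n+1) * (-z) ≤ Am n + Bm n * (-z) :=
        (stepM n z (by omega) hnK).2 (hz n hn (by omega))
      exact le_trans h4 (ih (by omega) hz)
  have evalP : ∀ (m : ℕ) (z : ℝ), 1 ≤ m → m ≤ K →
      (∀ i, 1 ≤ i → i + 1 ≤ m → H i ≤ z) → z ≤ H m →
      phiPL K Ap Bp z = Ap m + Bp m * z := by
    intro m z h1 hmK hlow hup
    have hzK : z ≤ H K := le_trans hup (Hmono m K hmK le_rfl)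
    have hlineK : 0 ≤ Ap K + Bp K * z := by
      nlinarith [mul_nonneg (neg_nonneg.2 hC1pK.le) (sub_nonneg.2 hzK)]
    have hm0 : 0 ≤ Ap m + Bp m * z :=
      le_trans hlineK (chainP_down z m K h1 hmK le_rfl
        (fun i hi _ => le_trans hup (Hmono m i hi (by omega))))
    apply le_antisymm
    · apply phiPL_le hm0
      intro j hj
      simp only [Finset.mem_Icc] at hj
      rcases le_or_gt j m with h | h
      · exact chainP_up z j m hj.1 h hmK hlow
      · exact chainP_down z m j h1 h.le hj.2
          (fun i hi hi2 => le_trans hup (Hmono m i hi (by omega)))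
    · exact line_le_phiPL Ap Bp z (by simp only [Finset.mem_Icc]; omega)
  have evalPzero : ∀ z : ℝ, H K ≤ z → phiPL K Ap Bp z = 0 := by
    intro z hz
    refine le_antisymm ?_ (phiPL_nonneg K Ap Bp z)
    apply phiPL_le le_rfl
    intro j hj
    simp only [Finset.mem_Icc] at hj
    have h1 : Ap j + Bp j * z ≤ Ap K + Bp K * z :=
      chainP_up z j K hj.1 hj.2 le_rfl
        (fun i hi1 hi2 => le_trans (Hmono i K (by omega) le_rfl) hz)
    have h2 : Ap K + Bp K * z ≤ 0 := by
      nlinarith [mul_nonneg (neg_nonneg.2 hC1pK.le) (sub_nonneg.2 hz)]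
    linarith
  have evalM : ∀ (m : ℕ) (z : ℝ), 1 ≤ m → m ≤ K → H 0 ≤ z →
      (∀ i, 1 ≤ i → i + 1 ≤ m → H i ≤ z) → (∀ i, m ≤ i → i + 1 ≤ K → z ≤ H i) →
      phiPL K Am Bm (-z) = Am m + Bm m * (-z) := by
    intro m z h1 hmK h0 hlow hup
    have hline1 : 0 ≤ Am 1 + Bm 1 * (-z) := by
      nlinarith [mul_nonneg (neg_nonneg.2 hC1m1.le) (sub_nonneg.2 h0)]
    have hm0 : 0 ≤ Am m + Bm m * (-z) :=
      le_trans hline1 (chainM_up z 1 m le_rfl h1 hmK hlow)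
    apply le_antisymm
    · apply phiPL_le hm0
      intro j hj
      simp only [Finset.mem_Icc] at hj
      rcases le_or_gt j m with h | h
      · exact chainM_up z j m hj.1 h hmK hlow
      · exact chainM_down z m j h1 h.le hj.2 hup
    · exact line_le_phiPL Am Bm (-z) (by simp only [Finset.mem_Icc]; omega)
  have evalMzero : ∀ z : ℝ, z ≤ H 0 → phiPL K Am Bm (-z) = 0 := by
    intro z hz
    refine le_antisymm ?_ (phiPL_nonneg K Am Bm (-z))
    apply phiPL_le le_rfl
    intro j hj
    simp only [Finset.mem_Icc] at hj
    have h1 : Am j + Bm j * (-z) ≤ Am 1 + Bm 1 * (-z) :=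
      chainM_down z 1 j le_rfl hj.1 hj.2
        (fun i hi1 hi2 => le_trans hz (Hmono 0 i (by omega) (by omega)))
    have h2 : Am 1 + Bm 1 * (-z) ≤ 0 := by
      nlinarith [mul_nonneg (neg_nonneg.2 hC1m1.le) (sub_nonneg.2 hz)]
    linarith
  have ppMono : ∀ i j : ℕ, 1 ≤ i → i ≤ j → j ≤ K → pp i ≤ pp j := by
    intro i j h1 hij
    induction j, hij using Nat.le_induction with
    | base => intro _; exact le_rfl
    | succ n hn ih => intro hnK; exact le_trans (ih (by omega)) (le_of_lt (hppmono n (by omega) (by omega)))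
  have hcases : ∀ q : ℝ, pp 1 < q → q ≤ pp K →
      ∃ k, 1 ≤ k ∧ k + 1 ≤ K ∧ pp k < q ∧ q ≤ pp (k+1) := by
    intro q h1 h2
    set s := (Finset.Icc 1 K).filter (fun j => pp j < q) with hs
    have hne : s.Nonempty := ⟨1, by simp only [hs, Finset.mem_filter, Finset.mem_Icc]; exact ⟨⟨le_rfl, hK⟩, h1⟩⟩
    set k := s.max' hne with hk
    have hks : k ∈ s := Finset.max'_mem s hne
    simp only [hs, Finset.mem_filter, Finset.mem_Icc] at hks
    have hkK : k ≠ K := by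
      rintro h
      rw [h] at hks
      exact absurd hks.2 (not_lt.2 h2)
    have hk1 : ¬ pp (k+1) < q := by
      intro hlt
      have hmem : k + 1 ∈ s := by
        simp only [hs, Finset.mem_filter, Finset.mem_Icc]
        exact ⟨⟨by omega, by omega⟩, hlt⟩
      have := Finset.le_max' s (k+1) hmem
      omega
    exact ⟨k, hks.1.1, by omega, hks.2, not_lt.1 hk1⟩
  have hsj : ∀ j ∈ Finset.Icc 1 K, ∀ q : ℝ,
      q * Bp j - (1 - q) * Bm j = (Bp j + Bm j) * (q - pp j) := by
    intro j hj q
    simp only [Finset.mem_Icc] at hj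
    have hsum : Bp j + Bm j < 0 := by
      have := BpNeg j hj.1 hj.2; have := BmNeg j hj.1 hj.2; linarith
    have h3 := hC3 j (by simp only [Finset.mem_Icc]; omega)
    rw [div_eq_iff (by linarith : Bm j + Bp j ≠ 0)] at h3
    linear_combination -h3
  have branchR : ∀ (k : ℕ) (q z : ℝ), k + 1 ≤ K → 0 ≤ q → q ≤ 1 → q ≤ pp (k+1) → H k ≤ z →
      0 ≤ q * (phiPL K Ap Bp z - phiPL K Ap Bp (H k)) +
        (1 - q) * (phiPL K Am Bm (-z) - phiPL K Am Bm (-(H k))) ∧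
      ∀ t : ℝ, 0 < t → t < pp (k+1) - q →
        q * |phiPL K Ap Bp z - phiPL K Ap Bp (H k)| +
          (1 - q) * |phiPL K Am Bm (-z) - phiPL K Am Bm (-(H k))| ≤
        (1 + L / (c * t)) * (q * (phiPL K Ap Bp z - phiPL K Ap Bp (H k)) +
          (1 - q) * (phiPL K Am Bm (-z) - phiPL K Am Bm (-(H k)))) := by
    intro k q z hkK hq0 hq1 hqp hz
    have hj : k + 1 ∈ Finset.Icc 1 K := by simp only [Finset.mem_Icc]; omega
    have eP : phiPL K Ap Bp (H k) = Ap (k+1) + Bp (k+1) * H k :=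
      evalP (k+1) (H k) (by omega) hkK (fun i hi1 hi2 => Hmono i k (by omega) (by omega))
        (le_of_lt (hC2b k (by omega)))
    have eM : phiPL K Am Bm (-(H k)) = Am (k+1) + Bm (k+1) * (-(H k)) :=
      evalM (k+1) (H k) (by omega) hkK (Hmono 0 k (by omega) (by omega))
        (fun i hi1 hi2 => Hmono i k (by omega) (by omega))
        (fun i hi1 hi2 => Hmono k i (by omega) (by omega))
    have mP : Ap (k+1) + Bp (k+1) * z ≤ phiPL K Ap Bp z := line_le_phiPL Ap Bp z hj
    have mM : Am (k+1) + Bm (k+1) * (-z) ≤ phiPL K Am Bm (-z) := line_le_phiPL Am Bm (-z) hj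
    set u1 := phiPL K Ap Bp z - phiPL K Ap Bp (H k) with hu1
    set u2 := phiPL K Am Bm (-z) - phiPL K Am Bm (-(H k)) with hu2
    have hupge : Bp (k+1) * (z - H k) ≤ u1 := by
      have : Bp (k+1) * (z - H k) = (Ap (k+1) + Bp (k+1) * z) - (Ap (k+1) + Bp (k+1) * H k) := by ring
      rw [hu1, eP, this]
      linarith
    have humge : (-(Bm (k+1))) * (z - H k) ≤ u2 := by
      have : (-(Bm (k+1))) * (z - H k) = (Am (k+1) + Bm (k+1) * (-z)) - (Am (k+1) + Bm (k+1) * (-(H k))) := by ring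
      rw [hu2, eM, this]
      linarith
    have hGge : (q * Bp (k+1) - (1-q) * Bm (k+1)) * (z - H k) ≤ q * u1 + (1-q) * u2 := by
      have h1 : q * (Bp (k+1) * (z - H k)) ≤ q * u1 := mul_le_mul_of_nonneg_left hupge hq0
      have h2 : (1-q) * ((-(Bm (k+1))) * (z - H k)) ≤ (1-q) * u2 :=
        mul_le_mul_of_nonneg_left humge (by linarith)
      have h3 : (q * Bp (k+1) - (1-q) * Bm (k+1)) * (z - H k) =
          q * (Bp (k+1) * (z - H k)) + (1-q) * ((-(Bm (k+1))) * (z - H k)) := by ring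
      linarith
    have hsfac : q * Bp (k+1) - (1-q) * Bm (k+1) = (Bp (k+1) + Bm (k+1)) * (q - pp (k+1)) :=
      hsj (k+1) hj q
    have hsum : Bp (k+1) + Bm (k+1) < 0 := by
      have := BpNeg (k+1) (by omega) hkK; have := BmNeg (k+1) (by omega) hkK; linarith
    have hs0 : 0 ≤ q * Bp (k+1) - (1-q) * Bm (k+1) := by
      rw [hsfac]
      nlinarith [mul_nonneg (neg_nonneg.2 hsum.le) (sub_nonneg.2 hqp)]
    have hG0 : 0 ≤ q * u1 + (1-q) * u2 :=
      le_trans (mul_nonneg hs0 (sub_nonneg.2 hz)) hGge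
    refine ⟨hG0, ?_⟩
    intro t ht htm
    have hct : 0 < c * t := mul_pos hcpos ht
    have hsct : c * t ≤ q * Bp (k+1) - (1-q) * Bm (k+1) := by
      rw [hsfac]
      have h5 : c ≤ -(Bp (k+1) + Bm (k+1)) := hcle (k+1) hj
      nlinarith
    have hzH : c * t * (z - H k) ≤ q * u1 + (1-q) * u2 :=
      le_trans (mul_le_mul_of_nonneg_right hsct (sub_nonneg.2 hz)) hGge
    have hupabs : |u1| ≤ L * (z - H k) := by
      have h6 := phiPL_abs_sub_le (A := Ap) hLP (by linarith) z (H k)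
      rwa [abs_of_nonneg (sub_nonneg.2 hz)] at h6
    have humabs : |u2| ≤ L * (z - H k) := by
      have h6 := phiPL_abs_sub_le (A := Am) hLM (by linarith) (-z) (-(H k))
      rwa [show (-z) - (-(H k)) = -(z - H k) by ring, abs_neg,
        abs_of_nonneg (sub_nonneg.2 hz)] at h6
    have hLHS : q * |u1| + (1-q) * |u2| ≤ L * (z - H k) := by
      have h8 : q * |u1| ≤ q * (L * (z - H k)) := mul_le_mul_of_nonneg_left hupabs hq0
      have h9 : (1-q) * |u2| ≤ (1-q) * (L * (z - H k)) :=
        mul_le_mul_of_nonneg_left humabs (by linarith)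
      nlinarith
    calc q * |u1| + (1-q) * |u2| ≤ L * (z - H k) := hLHS
      _ = (L / (c*t)) * (c * t * (z - H k)) := by field_simp
      _ ≤ (L / (c*t)) * (q * u1 + (1-q) * u2) :=
          mul_le_mul_of_nonneg_left hzH (div_nonneg (by linarith) hct.le)
      _ ≤ (1 + L / (c*t)) * (q * u1 + (1-q) * u2) := by nlinarith [hG0]
  have branchL : ∀ (k : ℕ) (q z : ℝ), 1 ≤ k → k ≤ K → pp k < q → 0 ≤ q → q ≤ 1 → z ≤ H k →
      0 ≤ q * (phiPL K Ap Bp z - phiPL K Ap Bp (H k)) +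
        (1 - q) * (phiPL K Am Bm (-z) - phiPL K Am Bm (-(H k))) ∧
      ∀ t : ℝ, 0 < t → t < q - pp k →
        q * |phiPL K Ap Bp z - phiPL K Ap Bp (H k)| +
          (1 - q) * |phiPL K Am Bm (-z) - phiPL K Am Bm (-(H k))| ≤
        (1 + L / (c * t)) * (q * (phiPL K Ap Bp z - phiPL K Ap Bp (H k)) +
          (1 - q) * (phiPL K Am Bm (-z) - phiPL K Am Bm (-(H k)))) := by
    intro k q z hk1 hkK hlt hq0 hq1 hz
    have hj : k ∈ Finset.Icc 1 K := by simp only [Finset.mem_Icc]; omega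
    have eP : phiPL K Ap Bp (H k) = Ap k + Bp k * H k :=
      evalP k (H k) hk1 hkK (fun i hi1 hi2 => Hmono i k (by omega) (by omega)) le_rfl
    have eM : phiPL K Am Bm (-(H k)) = Am k + Bm k * (-(H k)) :=
      evalM k (H k) hk1 hkK (Hmono 0 k (by omega) (by omega))
        (fun i hi1 hi2 => Hmono i k (by omega) (by omega))
        (fun i hi1 hi2 => Hmono k i hi1 (by omega))
    have mP : Ap k + Bp k * z ≤ phiPL K Ap Bp z := line_le_phiPL Ap Bp z hj
    have mM : Am k + Bm k * (-z) ≤ phiPL K Am Bm (-z) := line_le_phiPL Am Bm (-z) hj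
    set u1 := phiPL K Ap Bp z - phiPL K Ap Bp (H k) with hu1
    set u2 := phiPL K Am Bm (-z) - phiPL K Am Bm (-(H k)) with hu2
    have hupge : Bp k * (z - H k) ≤ u1 := by
      have h0 : Bp k * (z - H k) = (Ap k + Bp k * z) - (Ap k + Bp k * H k) := by ring
      rw [hu1, eP, h0]
      linarith
    have humge : (-(Bm k)) * (z - H k) ≤ u2 := by
      have h0 : (-(Bm k)) * (z - H k) = (Am k + Bm k * (-z)) - (Am k + Bm k * (-(H k))) := by ring
      rw [hu2, eM, h0]
      linarith
    have hGge : (q * Bp k - (1-q) * Bm k) * (z - H k) ≤ q * u1 + (1-q) * u2 := by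
      have h1 : q * (Bp k * (z - H k)) ≤ q * u1 := mul_le_mul_of_nonneg_left hupge hq0
      have h2 : (1-q) * ((-(Bm k)) * (z - H k)) ≤ (1-q) * u2 :=
        mul_le_mul_of_nonneg_left humge (by linarith)
      have h3 : (q * Bp k - (1-q) * Bm k) * (z - H k) =
          q * (Bp k * (z - H k)) + (1-q) * ((-(Bm k)) * (z - H k)) := by ring
      linarith
    have hsfac : q * Bp k - (1-q) * Bm k = (Bp k + Bm k) * (q - pp k) := hsj k hj q
    have hsum : Bp k + Bm k < 0 := by
      have := BpNeg k hk1 hkK; have := BmNeg k hk1 hkK; linarith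
    have hs0 : q * Bp k - (1-q) * Bm k ≤ 0 := by
      rw [hsfac]
      nlinarith [mul_nonneg (neg_nonneg.2 hsum.le) (sub_nonneg.2 hlt.le)]
    have hG0 : 0 ≤ q * u1 + (1-q) * u2 :=
      le_trans (by nlinarith [sub_nonpos.2 hz]) hGge
    refine ⟨hG0, ?_⟩
    intro t ht htm
    have hct : 0 < c * t := mul_pos hcpos ht
    have hsct : c * t ≤ -(q * Bp k - (1-q) * Bm k) := by
      rw [hsfac]
      have h5 : c ≤ -(Bp k + Bm k) := hcle k hj
      nlinarith
    have hzH : c * t * (H k - z) ≤ q * u1 + (1-q) * u2 := by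
      refine le_trans ?_ hGge
      nlinarith [sub_nonneg.2 hz]
    have hupabs : |u1| ≤ L * (H k - z) := by
      have h6 := phiPL_abs_sub_le (A := Ap) hLP (by linarith) z (H k)
      rwa [show z - H k = -(H k - z) by ring, abs_neg, abs_of_nonneg (sub_nonneg.2 hz)] at h6
    have humabs : |u2| ≤ L * (H k - z) := by
      have h6 := phiPL_abs_sub_le (A := Am) hLM (by linarith) (-z) (-(H k))
      rwa [show (-z) - (-(H k)) = H k - z from by ring, abs_of_nonneg (sub_nonneg.2 hz)] at h6
    have hLHS : q * |u1| + (1-q) * |u2| ≤ L * (H k - z) := by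
      have h8 : q * |u1| ≤ q * (L * (H k - z)) := mul_le_mul_of_nonneg_left hupabs hq0
      have h9 : (1-q) * |u2| ≤ (1-q) * (L * (H k - z)) :=
        mul_le_mul_of_nonneg_left humabs (by linarith)
      nlinarith
    calc q * |u1| + (1-q) * |u2| ≤ L * (H k - z) := hLHS
      _ = (L / (c*t)) * (c * t * (H k - z)) := by field_simp
      _ ≤ (L / (c*t)) * (q * u1 + (1-q) * u2) :=
          mul_le_mul_of_nonneg_left hzH (div_nonneg (by linarith) hct.le)
      _ ≤ (1 + L / (c*t)) * (q * u1 + (1-q) * u2) := by nlinarith [hG0]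
  have hBpnp : ∀ j ∈ Finset.Icc 1 K, Bp j ≤ 0 := by
    intro j hj; simp only [Finset.mem_Icc] at hj; exact (BpNeg j hj.1 hj.2).le
  have hBmnp : ∀ j ∈ Finset.Icc 1 K, Bm j ≤ 0 := by
    intro j hj; simp only [Finset.mem_Icc] at hj; exact (BmNeg j hj.1 hj.2).le
  have key : ∀ q z : ℝ, 0 ≤ q → q ≤ 1 →
      0 ≤ q * (phiPL K Ap Bp z - phiPL K Ap Bp (tst q)) +
        (1 - q) * (phiPL K Am Bm (-z) - phiPL K Am Bm (-(tst q))) ∧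
      (∀ t : ℝ, 0 < t → (∀ j ∈ Finset.Icc 1 K, t < |q - pp j|) →
        q * |phiPL K Ap Bp z - phiPL K Ap Bp (tst q)| +
          (1 - q) * |phiPL K Am Bm (-z) - phiPL K Am Bm (-(tst q))| ≤
        (1 + L / (c * t)) * (q * (phiPL K Ap Bp z - phiPL K Ap Bp (tst q)) +
          (1 - q) * (phiPL K Am Bm (-z) - phiPL K Am Bm (-(tst q))))) := by
    intro q z hq0 hq1
    rcases le_or_gt q (pp 1) with hq | hq
    · rw [htst0 q hq]
      rcases le_or_gt (H 0) z with hz | hz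
      · have hbr := branchR 0 q z (by omega) hq0 hq1 hq hz
        exact ⟨hbr.1, fun t ht hm => hbr.2 t ht (by
          have h := hm 1 (by simp only [Finset.mem_Icc]; omega)
          rw [abs_sub_comm, abs_of_nonneg (by linarith)] at h
          simpa using h)⟩
      · have eQ1 : phiPL K Am Bm (-z) = 0 := evalMzero z hz.le
        have eQ0 : phiPL K Am Bm (-(H 0)) = 0 := evalMzero (H 0) le_rfl
        have hup0 : 0 ≤ phiPL K Ap Bp z - phiPL K Ap Bp (H 0) :=
          sub_nonneg.2 (phiPL_anti hBpnp hz.le)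
        constructor
        · rw [eQ1, eQ0]
          nlinarith [mul_nonneg hq0 hup0]
        · intro t ht hm
          rw [eQ1, eQ0]
          simp only [sub_zero, abs_zero, mul_zero, add_zero]
          rw [abs_of_nonneg hup0]
          have hct : 0 < c * t := mul_pos hcpos ht
          have hLct : 0 ≤ L / (c*t) := div_nonneg (by linarith) hct.le
          nlinarith [mul_nonneg hLct (mul_nonneg hq0 hup0)]
    · rcases le_or_gt q (pp K) with hqK | hqK
      · obtain ⟨k, hk1, hkK, hlt, hle⟩ := hcases q hq hqK
        rw [htstmid q k hk1 (by omega) hlt hle]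
        rcases le_or_gt (H k) z with hz | hz
        · have hbr := branchR k q z hkK hq0 hq1 hle hz
          exact ⟨hbr.1, fun t ht hm => hbr.2 t ht (by
            have h := hm (k+1) (by simp only [Finset.mem_Icc]; omega)
            rw [abs_sub_comm, abs_of_nonneg (by linarith)] at h
            exact h)⟩
        · have hbr := branchL k q z hk1 (by omega) hlt hq0 hq1 hz.le
          exact ⟨hbr.1, fun t ht hm => hbr.2 t ht (by
            have h := hm k (by simp only [Finset.mem_Icc]; omega)
            rw [abs_of_nonneg (by linarith)] at h
            exact h)⟩
      · rw [htstK q hqK]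
        rcases le_or_gt z (H K) with hz | hz
        · have hbr := branchL K q z hK le_rfl hqK hq0 hq1 hz
          exact ⟨hbr.1, fun t ht hm => hbr.2 t ht (by
            have h := hm K (by simp only [Finset.mem_Icc]; omega)
            rw [abs_of_nonneg (by linarith)] at h
            exact h)⟩
        · have eP1 : phiPL K Ap Bp z = 0 := evalPzero z hz.le
          have eP0 : phiPL K Ap Bp (H K) = 0 := evalPzero (H K) le_rfl
          have hum0 : 0 ≤ phiPL K Am Bm (-z) - phiPL K Am Bm (-(H K)) :=
            sub_nonneg.2 (phiPL_anti hBmnp (by linarith : -z ≤ -(H K)))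
          constructor
          · rw [eP1, eP0]
            nlinarith [mul_nonneg (by linarith : (0:ℝ) ≤ 1 - q) hum0]
          · intro t ht hm
            rw [eP1, eP0]
            simp only [sub_zero, abs_zero, mul_zero, zero_add, sub_self]
            rw [abs_of_nonneg hum0]
            have hct : 0 < c * t := mul_pos hcpos ht
            have hLct : 0 ≤ L / (c*t) := div_nonneg (by linarith) hct.le
            nlinarith [mul_nonneg hLct (mul_nonneg (by linarith : (0:ℝ) ≤ 1 - q) hum0)]
  exact key


noncomputable def ggF {X : Type*} (K : ℕ) (Ap Bp Am Bm : ℕ → ℝ) (tst : ℝ → ℝ) (p f : X → ℝ) (x : X) : ℝ :=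
  p x * (phiPL K Ap Bp (f x) - phiPL K Ap Bp (tst (p x)))
    + (1 - p x) * (phiPL K Am Bm (-(f x)) - phiPL K Am Bm (-(tst (p x))))

noncomputable def hhF {X : Type*} (K : ℕ) (Ap Bp Am Bm : ℕ → ℝ) (tst : ℝ → ℝ) (p f : X → ℝ) (x : X) : ℝ :=
  p x * (phiPL K Ap Bp (f x) - phiPL K Ap Bp (tst (p x))) ^ 2
    + (1 - p x) * (phiPL K Am Bm (-(f x)) - phiPL K Am Bm (-(tst (p x)))) ^ 2

/-- First-moment excess surrogate risk functional `E₁(f)`. -/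
noncomputable def exc1 {X : Type*} [MeasurableSpace X] (μ : Measure X)
    (K : ℕ) (Ap Bp Am Bm : ℕ → ℝ) (tst : ℝ → ℝ) (p : X → ℝ) (f : X → ℝ) : ℝ :=
  ∫ x, (p x * (phiPL K Ap Bp (f x) - phiPL K Ap Bp (tst (p x)))
    + (1 - p x) * (phiPL K Am Bm (-(f x)) - phiPL K Am Bm (-(tst (p x))))) ∂μ

/-- Second-moment excess surrogate risk functional `E₂(f)`. -/
noncomputable def exc2 {X : Type*} [MeasurableSpace X] (μ : Measure X)
    (K : ℕ) (Ap Bp Am Bm : ℕ → ℝ) (tst : ℝ → ℝ) (p : X → ℝ) (f : X → ℝ) : ℝ :=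
  ∫ x, (p x * (phiPL K Ap Bp (f x) - phiPL K Ap Bp (tst (p x))) ^ 2
    + (1 - p x) * (phiPL K Am Bm (-(f x)) - phiPL K Am Bm (-(tst (p x)))) ^ 2) ∂μ

lemma exc1_eq {X : Type*} [MeasurableSpace X] (μ : Measure X)
    (K : ℕ) (Ap Bp Am Bm : ℕ → ℝ) (tst : ℝ → ℝ) (p : X → ℝ) (f : X → ℝ) :
    exc1 μ K Ap Bp Am Bm tst p f = ∫ x, ggF K Ap Bp Am Bm tst p f x ∂μ := rfl

lemma exc2_eq {X : Type*} [MeasurableSpace X] (μ : Measure X)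
    (K : ℕ) (Ap Bp Am Bm : ℕ → ℝ) (tst : ℝ → ℝ) (p : X → ℝ) (f : X → ℝ) :
    exc2 μ K Ap Bp Am Bm tst p f = ∫ x, hhF K Ap Bp Am Bm tst p f x ∂μ := rfl

/-- Bernstein-class property: under conditions (C1)-(C3) and the margin condition with
constants `A ≥ 1`, `α > 0`, for every `B > 0` there is `B′ > 0` such that every measurable
`f` with `|f| ≤ B` satisfies `E₂(f) ≤ B′·(E₁(f))^{α/(1+α)}`. -/
theorem stmt_15 {X : Type*} [MeasurableSpace X] (μ : Measure X) [IsProbabilityMeasure μ]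
    (K : ℕ) (hK : 1 ≤ K) (pp : ℕ → ℝ)
    (hpp0' : pp 0 = 0) (hppK1 : pp (K + 1) = 1)
    (hpp0 : 0 < pp 1) (hppK : pp K < 1)
    (hppmono : ∀ k, 1 ≤ k → k < K → pp k < pp (k + 1))
    (Ap Bp Am Bm : ℕ → ℝ) (H Hm : ℕ → ℝ)
    (hH0 : H 0 = Am 1 / Bm 1)
    (hHmid : ∀ k, 1 ≤ k → k ≤ K - 1 → H k = (Ap k - Ap (k + 1)) / (Bp (k + 1) - Bp k))
    (hHK : H K = -Ap K / Bp K)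
    (hHm : ∀ k, 1 ≤ k → k ≤ K - 1 → Hm k = (Am k - Am (k + 1)) / (Bm (k + 1) - Bm k))
    (hC1p : ∀ k, 1 ≤ k → k < K → Bp k < Bp (k + 1)) (hC1pK : Bp K < 0)
    (hC1m : ∀ k, 1 ≤ k → k < K → Bm (k + 1) < Bm k) (hC1m1 : Bm 1 < 0)
    (hC2a : ∀ k, 1 ≤ k → k ≤ K - 1 → -Hm k = H k)
    (hC2b : ∀ k, k < K → H k < H (k + 1))
    (hC3 : ∀ k ∈ Finset.Icc 1 K, Bm k / (Bm k + Bp k) = pp k)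
    -- pointwise surrogate-optimal value
    (tst : ℝ → ℝ)
    (htst0 : ∀ p : ℝ, p ≤ pp 1 → tst p = H 0)
    (htstmid : ∀ p : ℝ, ∀ k, 1 ≤ k → k ≤ K - 1 → pp k < p → p ≤ pp (k + 1) → tst p = H k)
    (htstK : ∀ p : ℝ, pp K < p → tst p = H K)
    -- conditional class probability
    (p : X → ℝ) (hpmeas : Measurable p) (hp0 : ∀ x, 0 ≤ p x) (hp1 : ∀ x, p x ≤ 1)
    -- margin condition with constants A ≥ 1 and α > 0
    (A α : ℝ) (hA : 1 ≤ A) (hα : 0 < α)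
    (hmargin : ∀ k ∈ Finset.Icc 1 K, ∀ t : ℝ, 0 ≤ t →
      (∀ j ∈ Finset.Icc 1 (K + 1), t < pp j - pp (j - 1)) →
      μ {x | |p x - pp k| ≤ t} ≤ ENNReal.ofReal (A * t ^ α)) :
    ∀ B : ℝ, 0 < B → ∃ B' : ℝ, 0 < B' ∧
      ∀ f : X → ℝ, Measurable f → (∀ x, |f x| ≤ B) →
        exc2 μ K Ap Bp Am Bm tst p f
          ≤ B' * exc1 μ K Ap Bp Am Bm tst p f ^ (α / (1 + α)) := by
  -- small preliminaries
  have Hmono : ∀ i j : ℕ, i ≤ j → j ≤ K → H i ≤ H j := by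
    intro i j hij
    induction j, hij using Nat.le_induction with
    | base => intro _; exact le_rfl
    | succ n hn ih => intro hnK; exact le_trans (ih (by omega)) (le_of_lt (hC2b n (by omega)))
  have ppMono : ∀ i j : ℕ, 1 ≤ i → i ≤ j → j ≤ K → pp i ≤ pp j := by
    intro i j h1 hij
    induction j, hij using Nat.le_induction with
    | base => intro _; exact le_rfl
    | succ n hn ih =>
      intro hnK
      exact le_trans (ih (by omega)) (le_of_lt (hppmono n (by omega) (by omega)))
  have BpMono : ∀ i j : ℕ, 1 ≤ i → i ≤ j → j ≤ K → Bp i ≤ Bp j := by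
    intro i j h1 hij
    induction j, hij using Nat.le_induction with
    | base => intro _; exact le_rfl
    | succ n hn ih =>
      intro hnK
      exact le_trans (ih (by omega)) (le_of_lt (hC1p n (by omega) (by omega)))
  have BmMono : ∀ i j : ℕ, 1 ≤ i → i ≤ j → j ≤ K → Bm j ≤ Bm i := by
    intro i j h1 hij
    induction j, hij using Nat.le_induction with
    | base => intro _; exact le_rfl
    | succ n hn ih =>
      intro hnK
      exact le_trans (le_of_lt (hC1m n (by omega) (by omega))) (ih (by omega))
  have BpNeg : ∀ j, 1 ≤ j → j ≤ K → Bp j < 0 :=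
    fun j h1 h2 => lt_of_le_of_lt (BpMono j K h1 h2 le_rfl) hC1pK
  have BmNeg : ∀ j, 1 ≤ j → j ≤ K → Bm j < 0 :=
    fun j h1 h2 => lt_of_le_of_lt (BmMono 1 j le_rfl h1 h2) hC1m1
  have hcases : ∀ q : ℝ, pp 1 < q → q ≤ pp K →
      ∃ k, 1 ≤ k ∧ k + 1 ≤ K ∧ pp k < q ∧ q ≤ pp (k+1) := by
    intro q h1 h2
    set s := (Finset.Icc 1 K).filter (fun j => pp j < q) with hs
    have hne : s.Nonempty :=
      ⟨1, by simp only [hs, Finset.mem_filter, Finset.mem_Icc]; exact ⟨⟨le_rfl, hK⟩, h1⟩⟩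
    set k := s.max' hne with hk
    have hks : k ∈ s := Finset.max'_mem s hne
    simp only [hs, Finset.mem_filter, Finset.mem_Icc] at hks
    have hkK : k ≠ K := by
      rintro h
      rw [h] at hks
      exact absurd hks.2 (not_lt.2 h2)
    have hk1 : ¬ pp (k+1) < q := by
      intro hlt
      have hmem : k + 1 ∈ s := by
        simp only [hs, Finset.mem_filter, Finset.mem_Icc]
        exact ⟨⟨by omega, by omega⟩, hlt⟩
      have := Finset.le_max' s (k+1) hmem
      omega
    exact ⟨k, hks.1.1, by omega, hks.2, not_lt.1 hk1⟩
  -- global constants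
  have hIccNe : (Finset.Icc 1 K).Nonempty := ⟨1, by simp only [Finset.mem_Icc]; omega⟩
  obtain ⟨L, hL1, hLP, hLM⟩ : ∃ L : ℝ, (1:ℝ) ≤ L ∧ (∀ j ∈ Finset.Icc 1 K, |Bp j| ≤ L)
      ∧ (∀ j ∈ Finset.Icc 1 K, |Bm j| ≤ L) := by
    refine ⟨(∑ j ∈ Finset.Icc 1 K, (|Bp j| + |Bm j|)) + 1, ?_, ?_, ?_⟩
    · have hsum0 : 0 ≤ ∑ j ∈ Finset.Icc 1 K, (|Bp j| + |Bm j|) :=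
        Finset.sum_nonneg (fun j _ => by positivity)
      linarith
    · intro j hj
      have h : |Bp j| + |Bm j| ≤ ∑ i ∈ Finset.Icc 1 K, (|Bp i| + |Bm i|) :=
        Finset.single_le_sum (f := fun j => |Bp j| + |Bm j|) (fun i _ => by positivity) hj
      linarith [abs_nonneg (Bm j)]
    · intro j hj
      have h : |Bp j| + |Bm j| ≤ ∑ i ∈ Finset.Icc 1 K, (|Bp i| + |Bm i|) :=
        Finset.single_le_sum (f := fun j => |Bp j| + |Bm j|) (fun i _ => by positivity) hj
      linarith [abs_nonneg (Bp j)]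
  obtain ⟨c, hcpos, hcle⟩ : ∃ c : ℝ, 0 < c ∧ ∀ j ∈ Finset.Icc 1 K, c ≤ -(Bp j + Bm j) := by
    refine ⟨(Finset.Icc 1 K).inf' hIccNe (fun j => -(Bp j + Bm j)), ?_,
      fun j hj => Finset.inf'_le _ hj⟩
    rw [Finset.lt_inf'_iff]
    intro j hj; simp only [Finset.mem_Icc] at hj
    have h1 := BpNeg j hj.1 hj.2; have h2 := BmNeg j hj.1 hj.2; linarith
  obtain ⟨tmax, htmpos, htmle⟩ : ∃ tm : ℝ, 0 < tm
      ∧ ∀ j ∈ Finset.Icc 1 (K+1), tm ≤ pp j - pp (j-1) := by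
    have hKe2 : (Finset.Icc 1 (K+1)).Nonempty := ⟨1, by simp only [Finset.mem_Icc]; omega⟩
    refine ⟨(Finset.Icc 1 (K+1)).inf' hKe2 (fun j => pp j - pp (j-1)), ?_,
      fun j hj => Finset.inf'_le _ hj⟩
    rw [Finset.lt_inf'_iff]
    intro j hj; simp only [Finset.mem_Icc] at hj
    rcases eq_or_ne j 1 with h1 | h1
    · subst h1
      simp only [show (1:ℕ)-1 = 0 from rfl, hpp0']
      linarith
    · rcases eq_or_ne j (K+1) with h2 | h2
      · subst h2
        simp only [Nat.add_sub_cancel, hppK1]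
        linarith
      · have h5 := hppmono (j-1) (by omega) (by omega)
        have h6 : j - 1 + 1 = j := by omega
        rw [h6] at h5; linarith
  have keyAll := pwKey K hK pp Ap Bp Am Bm H Hm hH0 hHmid hHK hHm hC1p hC1pK hC1m hC1m1
    hC2a hC2b hC3 hpp0' hppK1 hpp0 hppK hppmono tst htst0 htstmid htstK L c hLP hLM hL1
    hcpos hcle
  -- tst as a measurable function of p
  have hTeq : ∀ q : ℝ, tst q = H (((Finset.Icc 1 K).filter (fun k => pp k < q)).card) := by
    intro q
    rcases le_or_gt q (pp 1) with h | h
    · rw [htst0 q h]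
      have he : (Finset.Icc 1 K).filter (fun k => pp k < q) = ∅ := by
        rw [Finset.filter_eq_empty_iff]
        intro j hj
        simp only [Finset.mem_Icc] at hj
        exact not_lt.2 (le_trans h (ppMono 1 j le_rfl hj.1 hj.2))
      rw [he, Finset.card_empty]
    · rcases le_or_gt q (pp K) with h2 | h2
      · obtain ⟨k, hk1, hkK, hlt, hle⟩ := hcases q h h2
        rw [htstmid q k hk1 (by omega) hlt hle]
        congr 1
        have he : (Finset.Icc 1 K).filter (fun j => pp j < q) = Finset.Icc 1 k := by
          ext j
          simp only [Finset.mem_filter, Finset.mem_Icc]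
          constructor
          · rintro ⟨⟨hj1, hjK⟩, hjq⟩
            refine ⟨hj1, ?_⟩
            by_contra hc
            push_neg at hc
            have := ppMono (k+1) j (by omega) (by omega) (by omega)
            linarith
          · rintro ⟨hj1, hjk⟩
            exact ⟨⟨hj1, by omega⟩, lt_of_le_of_lt (ppMono j k hj1 hjk (by omega)) hlt⟩
        rw [he, Nat.card_Icc]
        omega
      · rw [htstK q h2]
        congr 1
        have he : (Finset.Icc 1 K).filter (fun j => pp j < q) = Finset.Icc 1 K := by
          rw [Finset.filter_eq_self]
          intro j hj
          simp only [Finset.mem_Icc] at hj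
          exact lt_of_le_of_lt (ppMono j K hj.1 hj.2 le_rfl) h2
        rw [he, Nat.card_Icc]
        omega
  have hcardm : Measurable fun q : ℝ => ((Finset.Icc 1 K).filter (fun k => pp k < q)).card := by
    have he : (fun q : ℝ => ((Finset.Icc 1 K).filter (fun k => pp k < q)).card)
        = fun q => ∑ k ∈ Finset.Icc 1 K, if pp k < q then 1 else 0 := by
      funext q; rw [Finset.card_filter]
    rw [he]
    exact Finset.measurable_sum _ (fun k _ =>
      Measurable.ite (measurableSet_lt measurable_const measurable_id) measurable_const
        measurable_const)
  have hmTst : Measurable fun x : X => tst (p x) := by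
    have he : (fun x : X => tst (p x))
        = fun x => H (((Finset.Icc 1 K).filter (fun k => pp k < p x)).card) :=
      funext (fun x => hTeq (p x))
    rw [he]
    exact (measurable_from_top (f := H)).comp (hcardm.comp hpmeas)
  have htstRg : ∀ q : ℝ, H 0 ≤ tst q ∧ tst q ≤ H K := by
    intro q
    rcases le_or_gt q (pp 1) with h | h
    · rw [htst0 q h]; exact ⟨le_rfl, Hmono 0 K (by omega) le_rfl⟩
    · rcases le_or_gt q (pp K) with h2 | h2
      · obtain ⟨k, hk1, hkK, hlt, hle⟩ := hcases q h h2
        rw [htstmid q k hk1 (by omega) hlt hle]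
        exact ⟨Hmono 0 k (by omega) (by omega), Hmono k K (by omega) le_rfl⟩
      · rw [htstK q h2]; exact ⟨Hmono 0 K (by omega) le_rfl, le_rfl⟩
  -- start
  intro B hB
  obtain ⟨R, hR0, hRB, hRH0, hRHK⟩ : ∃ R : ℝ, 0 < R ∧ B ≤ R ∧ |H 0| ≤ R ∧ |H K| ≤ R := by
    refine ⟨B + |H 0| + |H K|, ?_, ?_, ?_, ?_⟩ <;>
      · have := abs_nonneg (H 0); have := abs_nonneg (H K); linarith
  obtain ⟨M, hM1, hphiPB, hphiMB⟩ : ∃ M : ℝ, (1:ℝ) ≤ M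
      ∧ (∀ w : ℝ, |w| ≤ R → phiPL K Ap Bp w ≤ M)
      ∧ (∀ w : ℝ, |w| ≤ R → phiPL K Am Bm w ≤ M) := by
    have hMsum0 : 0 ≤ ∑ j ∈ Finset.Icc 1 K, (|Ap j| + |Bp j| * R + |Am j| + |Bm j| * R) :=
      Finset.sum_nonneg (fun i _ => add_nonneg (add_nonneg (add_nonneg (abs_nonneg _)
        (mul_nonneg (abs_nonneg _) hR0.le)) (abs_nonneg _)) (mul_nonneg (abs_nonneg _) hR0.le))
    refine ⟨(∑ j ∈ Finset.Icc 1 K, (|Ap j| + |Bp j| * R + |Am j| + |Bm j| * R)) + 1,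
      by linarith, ?_, ?_⟩
    · intro w hw
      apply phiPL_le (by linarith : (0:ℝ) ≤ _)
      intro j hj
      have h2 : Bp j * w ≤ |Bp j| * R := by
        calc Bp j * w ≤ |Bp j * w| := le_abs_self _
          _ = |Bp j| * |w| := abs_mul _ _
          _ ≤ |Bp j| * R := mul_le_mul_of_nonneg_left hw (abs_nonneg _)
      have h3 : |Ap j| + |Bp j| * R + |Am j| + |Bm j| * R
          ≤ ∑ i ∈ Finset.Icc 1 K, (|Ap i| + |Bp i| * R + |Am i| + |Bm i| * R) :=
        Finset.single_le_sum
        (f := fun j => |Ap j| + |Bp j| * R + |Am j| + |Bm j| * R)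
        (fun i _ => add_nonneg (add_nonneg (add_nonneg (abs_nonneg _)
          (mul_nonneg (abs_nonneg _) hR0.le)) (abs_nonneg _))
          (mul_nonneg (abs_nonneg _) hR0.le)) hj
      have h4 := le_abs_self (Ap j)
      have h5 := abs_nonneg (Am j)
      have h6 := mul_nonneg (abs_nonneg (Bm j)) hR0.le
      linarith
    · intro w hw
      apply phiPL_le (by linarith : (0:ℝ) ≤ _)
      intro j hj
      have h2 : Bm j * w ≤ |Bm j| * R := by
        calc Bm j * w ≤ |Bm j * w| := le_abs_self _
          _ = |Bm j| * |w| := abs_mul _ _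
          _ ≤ |Bm j| * R := mul_le_mul_of_nonneg_left hw (abs_nonneg _)
      have h3 : |Ap j| + |Bp j| * R + |Am j| + |Bm j| * R
          ≤ ∑ i ∈ Finset.Icc 1 K, (|Ap i| + |Bp i| * R + |Am i| + |Bm i| * R) :=
        Finset.single_le_sum
        (f := fun j => |Ap j| + |Bp j| * R + |Am j| + |Bm j| * R)
        (fun i _ => add_nonneg (add_nonneg (add_nonneg (abs_nonneg _)
          (mul_nonneg (abs_nonneg _) hR0.le)) (abs_nonneg _))
          (mul_nonneg (abs_nonneg _) hR0.le)) hj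
      have h4 := le_abs_self (Am j)
      have h5 := abs_nonneg (Ap j)
      have h6 := mul_nonneg (abs_nonneg (Bp j)) hR0.le
      linarith
  obtain ⟨Mx, hMx1, hMxM⟩ : ∃ Mx : ℝ, (1:ℝ) ≤ Mx ∧ M ≤ Mx :=
    ⟨max 1 M, le_max_left _ _, le_max_right _ _⟩
  have hK1 : (1:ℝ) ≤ (K:ℝ) := by exact_mod_cast hK
  obtain ⟨D, hD0, hDdef⟩ : ∃ D : ℝ, 0 < D ∧ D = M^2 * (K:ℝ) * A := by
    refine ⟨M^2 * (K:ℝ) * A, ?_, rfl⟩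
    have h1 : (0:ℝ) < M^2 := pow_pos (by linarith) 2
    exact mul_pos (mul_pos h1 (by linarith)) (by linarith)
  have hLct0 : 0 ≤ 2*L/(c*tmax) := div_nonneg (by linarith) (mul_pos hcpos htmpos).le
  have hB'0 : 0 < M * tmax + M * L / c + D + M * (1 + 2*L/(c*tmax)) * Mx + D + 1 := by
    have h1 : 0 ≤ M * tmax := mul_nonneg (by linarith) htmpos.le
    have h2 : 0 ≤ M * L / c := div_nonneg (mul_nonneg (by linarith) (by linarith)) hcpos.le
    have h4 : 0 ≤ M * (1 + 2*L/(c*tmax)) * Mx :=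
      mul_nonneg (mul_nonneg (by linarith) (by linarith)) (by linarith)
    linarith only [h1, h2, h4, hD0]
  refine ⟨M * tmax + M * L / c + D + M * (1 + 2*L/(c*tmax)) * Mx + D + 1, hB'0, ?_⟩
  intro f hfmeas hfB
  have hfR : ∀ x, |f x| ≤ R := fun x => le_trans (hfB x) hRB
  have htstR : ∀ q : ℝ, |tst q| ≤ R := by
    intro q
    obtain ⟨h1, h2⟩ := htstRg q
    rw [abs_le]
    constructor
    · have := neg_abs_le (H 0); linarith
    · have := le_abs_self (H K); linarith
  have hupBd : ∀ x, |phiPL K Ap Bp (f x) - phiPL K Ap Bp (tst (p x))| ≤ M := by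
    intro x
    have h1 := phiPL_nonneg K Ap Bp (f x)
    have h2 := phiPL_nonneg K Ap Bp (tst (p x))
    have h3 := hphiPB (f x) (hfR x)
    have h4 := hphiPB (tst (p x)) (htstR (p x))
    rw [abs_le]; constructor <;> linarith
  have humBd : ∀ x, |phiPL K Am Bm (-(f x)) - phiPL K Am Bm (-(tst (p x)))| ≤ M := by
    intro x
    have h1 := phiPL_nonneg K Am Bm (-(f x))
    have h2 := phiPL_nonneg K Am Bm (-(tst (p x)))
    have h3 := hphiMB (-(f x)) (by rw [abs_neg]; exact hfR x)
    have h4 := hphiMB (-(tst (p x))) (by rw [abs_neg]; exact htstR (p x))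
    rw [abs_le]; constructor <;> linarith
  have hg0 : ∀ x, 0 ≤ ggF K Ap Bp Am Bm tst p f x :=
    fun x => (keyAll (p x) (f x) (hp0 x) (hp1 x)).1
  have hgBd : ∀ x, |ggF K Ap Bp Am Bm tst p f x| ≤ M := by
    intro x
    have h1 := hupBd x; have h2 := humBd x
    have h5 := hp0 x; have h6 := hp1 x
    show |p x * (phiPL K Ap Bp (f x) - phiPL K Ap Bp (tst (p x)))
      + (1 - p x) * (phiPL K Am Bm (-(f x)) - phiPL K Am Bm (-(tst (p x))))| ≤ M
    calc |p x * (phiPL K Ap Bp (f x) - phiPL K Ap Bp (tst (p x)))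
        + (1 - p x) * (phiPL K Am Bm (-(f x)) - phiPL K Am Bm (-(tst (p x))))|
        ≤ |p x * (phiPL K Ap Bp (f x) - phiPL K Ap Bp (tst (p x)))|
          + |(1 - p x) * (phiPL K Am Bm (-(f x)) - phiPL K Am Bm (-(tst (p x))))| := abs_add_le _ _
      _ = p x * |phiPL K Ap Bp (f x) - phiPL K Ap Bp (tst (p x))|
          + (1 - p x) * |phiPL K Am Bm (-(f x)) - phiPL K Am Bm (-(tst (p x)))| := by
            rw [abs_mul, abs_mul, abs_of_nonneg h5, abs_of_nonneg (by linarith : (0:ℝ) ≤ 1 - p x)]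
      _ ≤ p x * M + (1 - p x) * M := by
            have := mul_le_mul_of_nonneg_left h1 h5
            have := mul_le_mul_of_nonneg_left h2 (by linarith : (0:ℝ) ≤ 1 - p x)
            linarith
      _ = M := by ring
  have hPm : Measurable fun x : X => phiPL K Ap Bp (f x) :=
    (phiPL_continuous K Ap Bp).measurable.comp hfmeas
  have hPm0 : Measurable fun x : X => phiPL K Ap Bp (tst (p x)) :=
    (phiPL_continuous K Ap Bp).measurable.comp hmTst
  have hMm : Measurable fun x : X => phiPL K Am Bm (-(f x)) :=
    (phiPL_continuous K Am Bm).measurable.comp hfmeas.neg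
  have hMm0 : Measurable fun x : X => phiPL K Am Bm (-(tst (p x))) :=
    (phiPL_continuous K Am Bm).measurable.comp hmTst.neg
  have hgm : Measurable (ggF K Ap Bp Am Bm tst p f) := by
    unfold ggF
    exact (hpmeas.mul (hPm.sub hPm0)).add ((measurable_const.sub hpmeas).mul (hMm.sub hMm0))
  have hhm : Measurable (hhF K Ap Bp Am Bm tst p f) := by
    unfold hhF
    exact (hpmeas.mul ((hPm.sub hPm0).pow measurable_const)).add
      ((measurable_const.sub hpmeas).mul ((hMm.sub hMm0).pow measurable_const))
  have hgInt : Integrable (ggF K Ap Bp Am Bm tst p f) μ := by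
    refine Integrable.mono' (integrable_const M) hgm.aestronglyMeasurable ?_
    filter_upwards with x
    rw [Real.norm_eq_abs]; exact hgBd x
  have hh0 : ∀ x, 0 ≤ hhF K Ap Bp Am Bm tst p f x := by
    intro x
    have h5 := hp0 x; have h6 := hp1 x
    show 0 ≤ p x * (phiPL K Ap Bp (f x) - phiPL K Ap Bp (tst (p x))) ^ 2
      + (1 - p x) * (phiPL K Am Bm (-(f x)) - phiPL K Am Bm (-(tst (p x)))) ^ 2
    exact add_nonneg (mul_nonneg h5 (sq_nonneg _))
      (mul_nonneg (by linarith) (sq_nonneg _))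
  have hhBd : ∀ x, hhF K Ap Bp Am Bm tst p f x ≤ M^2 := by
    intro x
    have h5 := hp0 x; have h6 := hp1 x
    have e1 : (phiPL K Ap Bp (f x) - phiPL K Ap Bp (tst (p x))) ^ 2 ≤ M^2 := by
      rw [← sq_abs]
      exact pow_le_pow_left₀ (abs_nonneg _) (hupBd x) 2
    have e2 : (phiPL K Am Bm (-(f x)) - phiPL K Am Bm (-(tst (p x)))) ^ 2 ≤ M^2 := by
      rw [← sq_abs]
      exact pow_le_pow_left₀ (abs_nonneg _) (humBd x) 2
    show p x * (phiPL K Ap Bp (f x) - phiPL K Ap Bp (tst (p x))) ^ 2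
      + (1 - p x) * (phiPL K Am Bm (-(f x)) - phiPL K Am Bm (-(tst (p x)))) ^ 2 ≤ M^2
    have h7 := mul_le_mul_of_nonneg_left e1 h5
    have h8 := mul_le_mul_of_nonneg_left e2 (by linarith : (0:ℝ) ≤ 1 - p x)
    have h9 : p x * M^2 + (1 - p x) * M^2 = M^2 := by ring
    linarith
  have hhInt : Integrable (hhF K Ap Bp Am Bm tst p f) μ := by
    refine Integrable.mono' (integrable_const (M^2)) hhm.aestronglyMeasurable ?_
    filter_upwards with x
    rw [Real.norm_eq_abs, abs_of_nonneg (hh0 x)]; exact hhBd x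
  have hE1nn : 0 ≤ ∫ x, ggF K Ap Bp Am Bm tst p f x ∂μ := integral_nonneg hg0
  have hE1le : ∫ x, ggF K Ap Bp Am Bm tst p f x ∂μ ≤ M := by
    calc ∫ x, ggF K Ap Bp Am Bm tst p f x ∂μ ≤ ∫ _x, M ∂μ :=
          integral_mono hgInt (integrable_const M) (fun x => le_trans (le_abs_self _) (hgBd x))
      _ = M := by simp
  -- the main estimate, for an admissible margin width t
  have estim : ∀ t : ℝ, 0 < t → (∀ j ∈ Finset.Icc 1 (K+1), t < pp j - pp (j-1)) →
      (∫ x, hhF K Ap Bp Am Bm tst p f x ∂μ)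
        ≤ M * (1 + L/(c*t)) * (∫ x, ggF K Ap Bp Am Bm tst p f x ∂μ) + D * t ^ α := by
    intro t ht hgap
    set S := ⋂ j ∈ Finset.Icc 1 K, {x : X | t < |p x - pp j|} with hSdef
    have hSmeas : MeasurableSet S := by
      rw [hSdef]
      exact MeasurableSet.biInter (Finset.Icc 1 K).countable_toSet
        (fun j _ => measurableSet_lt measurable_const ((hpmeas.sub measurable_const).abs))
    have hScm : μ Sᶜ ≤ ENNReal.ofReal ((K:ℝ) * (A * t ^ α)) := by
      have h1 : Sᶜ ⊆ ⋃ j ∈ Finset.Icc 1 K, {x : X | |p x - pp j| ≤ t} := by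
        intro x hx
        rw [hSdef] at hx
        simp only [Set.mem_compl_iff, Set.mem_iInter, Set.mem_setOf_eq, not_forall, not_lt] at hx
        obtain ⟨j, hj, hjle⟩ := hx
        exact Set.mem_biUnion hj hjle
      calc μ Sᶜ ≤ μ (⋃ j ∈ Finset.Icc 1 K, {x : X | |p x - pp j| ≤ t}) := measure_mono h1
        _ ≤ ∑ j ∈ Finset.Icc 1 K, μ {x : X | |p x - pp j| ≤ t} :=
            measure_biUnion_finset_le _ _
        _ ≤ ∑ _j ∈ Finset.Icc 1 K, ENNReal.ofReal (A * t ^ α) :=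
            Finset.sum_le_sum (fun j hj => hmargin j hj t ht.le hgap)
        _ = (K : ENNReal) * ENNReal.ofReal (A * t ^ α) := by
            rw [Finset.sum_const, Nat.card_Icc, nsmul_eq_mul]
            norm_num
        _ = ENNReal.ofReal ((K:ℝ) * (A * t ^ α)) := by
            rw [ENNReal.ofReal_mul (by positivity : (0:ℝ) ≤ (K:ℝ)), ENNReal.ofReal_natCast]
    have hAt0 : 0 ≤ A * t ^ α := mul_nonneg (by linarith) (Real.rpow_nonneg ht.le α)
    have hScReal : (μ Sᶜ).toReal ≤ (K:ℝ) * (A * t ^ α) :=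
      ENNReal.toReal_le_of_le_ofReal (mul_nonneg (Nat.cast_nonneg K) hAt0) hScm
    have hCt0 : 0 ≤ M * (1 + L/(c*t)) := by
      have h0 := div_nonneg (by linarith : (0:ℝ) ≤ L) (mul_pos hcpos ht).le
      exact mul_nonneg (by linarith) (by linarith)
    have hptw : ∀ x ∈ S, hhF K Ap Bp Am Bm tst p f x
        ≤ M * (1 + L/(c*t)) * ggF K Ap Bp Am Bm tst p f x := by
      intro x hx
      have hxS : ∀ j ∈ Finset.Icc 1 K, t < |p x - pp j| := by
        intro j hj
        rw [hSdef] at hx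
        exact Set.mem_iInter₂.1 hx j hj
      have hkey2 := (keyAll (p x) (f x) (hp0 x) (hp1 x)).2 t ht hxS
      have h5 := hp0 x; have h6 := hp1 x
      have e1 : (phiPL K Ap Bp (f x) - phiPL K Ap Bp (tst (p x))) ^ 2
          ≤ M * |phiPL K Ap Bp (f x) - phiPL K Ap Bp (tst (p x))| := by
        have h1 : |phiPL K Ap Bp (f x) - phiPL K Ap Bp (tst (p x))|
            * |phiPL K Ap Bp (f x) - phiPL K Ap Bp (tst (p x))|
            ≤ M * |phiPL K Ap Bp (f x) - phiPL K Ap Bp (tst (p x))| :=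
          mul_le_mul_of_nonneg_right (hupBd x) (abs_nonneg _)
        calc (phiPL K Ap Bp (f x) - phiPL K Ap Bp (tst (p x))) ^ 2
            = |phiPL K Ap Bp (f x) - phiPL K Ap Bp (tst (p x))|
              * |phiPL K Ap Bp (f x) - phiPL K Ap Bp (tst (p x))| := by
                rw [abs_mul_abs_self, sq]
          _ ≤ _ := h1
      have e2 : (phiPL K Am Bm (-(f x)) - phiPL K Am Bm (-(tst (p x)))) ^ 2
          ≤ M * |phiPL K Am Bm (-(f x)) - phiPL K Am Bm (-(tst (p x)))| := by
        have h1 : |phiPL K Am Bm (-(f x)) - phiPL K Am Bm (-(tst (p x)))|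
            * |phiPL K Am Bm (-(f x)) - phiPL K Am Bm (-(tst (p x)))|
            ≤ M * |phiPL K Am Bm (-(f x)) - phiPL K Am Bm (-(tst (p x)))| :=
          mul_le_mul_of_nonneg_right (humBd x) (abs_nonneg _)
        calc (phiPL K Am Bm (-(f x)) - phiPL K Am Bm (-(tst (p x)))) ^ 2
            = |phiPL K Am Bm (-(f x)) - phiPL K Am Bm (-(tst (p x)))|
              * |phiPL K Am Bm (-(f x)) - phiPL K Am Bm (-(tst (p x)))| := by
                rw [abs_mul_abs_self, sq]
          _ ≤ _ := h1
      have e3 : hhF K Ap Bp Am Bm tst p f x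
          ≤ M * (p x * |phiPL K Ap Bp (f x) - phiPL K Ap Bp (tst (p x))|
            + (1 - p x) * |phiPL K Am Bm (-(f x)) - phiPL K Am Bm (-(tst (p x)))|) := by
        show p x * (phiPL K Ap Bp (f x) - phiPL K Ap Bp (tst (p x))) ^ 2
          + (1 - p x) * (phiPL K Am Bm (-(f x)) - phiPL K Am Bm (-(tst (p x)))) ^ 2 ≤ _
        have h7 := mul_le_mul_of_nonneg_left e1 h5
        have h8 := mul_le_mul_of_nonneg_left e2 (by linarith : (0:ℝ) ≤ 1 - p x)
        have h9 : M * (p x * |phiPL K Ap Bp (f x) - phiPL K Ap Bp (tst (p x))|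
            + (1 - p x) * |phiPL K Am Bm (-(f x)) - phiPL K Am Bm (-(tst (p x)))|)
            = p x * (M * |phiPL K Ap Bp (f x) - phiPL K Ap Bp (tst (p x))|)
              + (1 - p x) * (M * |phiPL K Am Bm (-(f x)) - phiPL K Am Bm (-(tst (p x)))|) := by
          ring
        linarith
      calc hhF K Ap Bp Am Bm tst p f x
          ≤ M * (p x * |phiPL K Ap Bp (f x) - phiPL K Ap Bp (tst (p x))|
            + (1 - p x) * |phiPL K Am Bm (-(f x)) - phiPL K Am Bm (-(tst (p x)))|) := e3
        _ ≤ M * ((1 + L / (c * t)) * (p x * (phiPL K Ap Bp (f x) - phiPL K Ap Bp (tst (p x)))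
            + (1 - p x) * (phiPL K Am Bm (-(f x)) - phiPL K Am Bm (-(tst (p x)))))) :=
              mul_le_mul_of_nonneg_left hkey2 (by linarith : (0:ℝ) ≤ M)
        _ = M * (1 + L/(c*t)) * ggF K Ap Bp Am Bm tst p f x := by
              show _ = M * (1 + L/(c*t)) * (p x * (phiPL K Ap Bp (f x) - phiPL K Ap Bp (tst (p x)))
                + (1 - p x) * (phiPL K Am Bm (-(f x)) - phiPL K Am Bm (-(tst (p x)))))
              ring
    have hgood : ∫ x in S, hhF K Ap Bp Am Bm tst p f x ∂μ
        ≤ M * (1 + L/(c*t)) * ∫ x, ggF K Ap Bp Am Bm tst p f x ∂μ := by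
      calc ∫ x in S, hhF K Ap Bp Am Bm tst p f x ∂μ
          ≤ ∫ x in S, M * (1 + L/(c*t)) * ggF K Ap Bp Am Bm tst p f x ∂μ :=
            setIntegral_mono_on hhInt.integrableOn ((hgInt.const_mul _).integrableOn) hSmeas hptw
        _ = M * (1 + L/(c*t)) * ∫ x in S, ggF K Ap Bp Am Bm tst p f x ∂μ :=
            integral_const_mul _ _
        _ ≤ M * (1 + L/(c*t)) * ∫ x, ggF K Ap Bp Am Bm tst p f x ∂μ :=
            mul_le_mul_of_nonneg_left
              (setIntegral_le_integral hgInt (Filter.Eventually.of_forall hg0)) hCt0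
    have hbad : ∫ x in Sᶜ, hhF K Ap Bp Am Bm tst p f x ∂μ ≤ M^2 * ((K:ℝ) * (A * t^α)) := by
      have h1 : ∫ x in Sᶜ, hhF K Ap Bp Am Bm tst p f x ∂μ ≤ ∫ _x in Sᶜ, M^2 ∂μ :=
        setIntegral_mono_on hhInt.integrableOn
          (integrableOn_const (measure_ne_top μ _)) hSmeas.compl
          (fun x _ => hhBd x)
      have h2 : ∫ _x in Sᶜ, (M^2 : ℝ) ∂μ = (μ Sᶜ).toReal * M^2 := by
        rw [setIntegral_const, smul_eq_mul]; rfl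
      have h3 : (μ Sᶜ).toReal * M^2 ≤ ((K:ℝ)*(A*t^α)) * M^2 :=
        mul_le_mul_of_nonneg_right hScReal (by positivity)
      have h4 : ((K:ℝ)*(A*t^α)) * M^2 = M^2*((K:ℝ)*(A*t^α)) := by ring
      linarith
    have hsplit : ∫ x, hhF K Ap Bp Am Bm tst p f x ∂μ
        = (∫ x in S, hhF K Ap Bp Am Bm tst p f x ∂μ)
          + ∫ x in Sᶜ, hhF K Ap Bp Am Bm tst p f x ∂μ :=
      (integral_add_compl hSmeas hhInt).symm
    have hDt : M^2*((K:ℝ)*(A*t^α)) = D * t^α := by rw [hDdef]; ring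
    linarith
  -- finish
  rw [exc1_eq, exc2_eq]
  set E1 := ∫ x, ggF K Ap Bp Am Bm tst p f x ∂μ with hE1def
  set E2 := ∫ x, hhF K Ap Bp Am Bm tst p f x ∂μ with hE2def
  have hβ : (0:ℝ) < α / (1+α) := div_pos hα (by linarith)
  rcases eq_or_lt_of_le hE1nn with hE10 | hE1p
  · have hE2le : ∀ ε : ℝ, 0 < ε → E2 ≤ ε := by
      intro ε hε
      set t := min (tmax/2) ((ε/D) ^ (α⁻¹ : ℝ)) with htdef
      have ht0 : 0 < t := lt_min (by linarith) (Real.rpow_pos_of_pos (div_pos hε hD0) _)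
      have hgap : ∀ j ∈ Finset.Icc 1 (K+1), t < pp j - pp (j-1) := by
        intro j hj
        have h1 : t ≤ tmax/2 := min_le_left _ _
        linarith [htmle j hj]
      have hest := estim t ht0 hgap
      have htε : t ^ α ≤ ε / D := by
        have h1 : t ≤ (ε/D) ^ (α⁻¹ : ℝ) := min_le_right _ _
        calc t ^ α ≤ ((ε/D) ^ (α⁻¹ : ℝ)) ^ α := Real.rpow_le_rpow ht0.le h1 hα.le
          _ = (ε/D) ^ (α⁻¹ * α) := by rw [← Real.rpow_mul (div_nonneg hε.le hD0.le)]
          _ = ε / D := by rw [inv_mul_cancel₀ hα.ne', Real.rpow_one]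
      have h2 : D * t ^ α ≤ ε := by
        have h3 := mul_le_mul_of_nonneg_left htε hD0.le
        have h4 : D * (ε/D) = ε := by field_simp
        linarith
      have h4 : M * (1 + L/(c*t)) * E1 = 0 := by rw [← hE10]; ring
      linarith only [hest, h2, h4]
    have hE20 : E2 ≤ 0 := by
      by_contra hcon
      push_neg at hcon
      linarith [hE2le (E2/2) (by linarith)]
    rw [← hE10, Real.zero_rpow hβ.ne', mul_zero]
    exact hE20
  · have h1α : (0:ℝ) < 1 + α := by linarith
    set β := α / (1+α) with hβdef
    set t0 := E1 ^ ((1+α)⁻¹ : ℝ) with ht0def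
    have ht0p : 0 < t0 := Real.rpow_pos_of_pos hE1p _
    have hEβp : 0 < E1 ^ β := Real.rpow_pos_of_pos hE1p _
    have hsplitE1 : E1 = t0 * E1 ^ β := by
      rw [ht0def, hβdef, ← Real.rpow_add hE1p]
      rw [show (1+α)⁻¹ + α/(1+α) = 1 by field_simp]
      exact (Real.rpow_one E1).symm
    have ht0α : t0 ^ α = E1 ^ β := by
      rw [ht0def, ← Real.rpow_mul hE1p.le, hβdef, inv_mul_eq_div]
    rcases le_or_gt t0 (tmax/2) with hcase | hcase
    · have hgap : ∀ j ∈ Finset.Icc 1 (K+1), t0 < pp j - pp (j-1) := by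
        intro j hj; linarith [htmle j hj]
      have hest := estim t0 ht0p hgap
      have e0 : M * (1 + L/(c*t0)) * E1 = M*(t0*E1^β) + (M*L/c)*E1^β := by
        conv_lhs => rw [hsplitE1]
        field_simp
      have hT2 : M * (t0 * E1^β) ≤ M * tmax * E1^β := by
        have h1 : t0 * E1^β ≤ tmax * E1^β :=
          mul_le_mul_of_nonneg_right (by linarith) hEβp.le
        have h2 := mul_le_mul_of_nonneg_left h1 (by linarith : (0:ℝ) ≤ M)
        have h3 : M * (tmax * E1^β) = M * tmax * E1^β := by ring
        linarith
      have hT3 : D * t0 ^ α = D * E1^β := by rw [ht0α]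
      have hBig : M*tmax + M*L/c + D
          ≤ M * tmax + M * L / c + D + M * (1 + 2*L/(c*tmax)) * Mx + D + 1 := by
        have h4 : 0 ≤ M * (1 + 2*L/(c*tmax)) * Mx :=
          mul_nonneg (mul_nonneg (by linarith only [hM1]) (by linarith only [hLct0]))
            (by linarith only [hMx1])
        linarith only [h4, hD0]
      calc E2 ≤ M * (1 + L/(c*t0)) * E1 + D * t0^α := hest
        _ = M*(t0*E1^β) + (M*L/c)*E1^β + D*E1^β := by rw [e0, hT3]
        _ ≤ M*tmax*E1^β + (M*L/c)*E1^β + D*E1^β := by linarith only [hT2]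
        _ = (M*tmax + M*L/c + D)*E1^β := by ring
        _ ≤ (M * tmax + M * L / c + D + M * (1 + 2*L/(c*tmax)) * Mx + D + 1) * E1^β :=
            mul_le_mul_of_nonneg_right hBig hEβp.le
    · have hgap : ∀ j ∈ Finset.Icc 1 (K+1), tmax/2 < pp j - pp (j-1) := by
        intro j hj; linarith [htmle j hj]
      have hest := estim (tmax/2) (by linarith) hgap
      have ht0M : t0 ≤ Mx := by
        calc t0 = E1 ^ ((1+α)⁻¹ : ℝ) := ht0def
          _ ≤ Mx ^ ((1+α)⁻¹ : ℝ) :=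
              Real.rpow_le_rpow hE1p.le (le_trans hE1le hMxM) (by positivity)
          _ ≤ Mx ^ (1:ℝ) :=
              Real.rpow_le_rpow_of_exponent_le hMx1 (by
                exact inv_le_one_of_one_le₀ (by linarith only [hα]))
          _ = Mx := Real.rpow_one _
      have hE1b : E1 ≤ Mx * E1^β := by
        calc E1 = t0 * E1^β := hsplitE1
          _ ≤ Mx * E1^β := mul_le_mul_of_nonneg_right ht0M hEβp.le
      have htm2 : (tmax/2) ^ α ≤ E1 ^ β := by
        rw [← ht0α]
        exact Real.rpow_le_rpow (by linarith) hcase.le hα.le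
      have hcoef : 0 ≤ M * (1 + 2*L/(c*tmax)) := mul_nonneg (by linarith) (by linarith)
      have he8 : M * (1 + L/(c*(tmax/2))) = M * (1 + 2*L/(c*tmax)) := by
        rw [show L/(c*(tmax/2)) = 2*L/(c*tmax) from by
          rw [div_eq_div_iff (by positivity) (by positivity)]
          ring]
      calc E2 ≤ M * (1 + L/(c*(tmax/2))) * E1 + D * (tmax/2)^α := hest
        _ = M * (1 + 2*L/(c*tmax)) * E1 + D * (tmax/2)^α := by rw [he8]
        _ ≤ M * (1 + 2*L/(c*tmax)) * (Mx * E1^β) + D * E1^β := by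
            have hh1 := mul_le_mul_of_nonneg_left hE1b hcoef
            have hh2 := mul_le_mul_of_nonneg_left htm2 hD0.le
            linarith only [hh1, hh2]
        _ = (M * (1 + 2*L/(c*tmax)) * Mx + D) * E1^β := by ring
        _ ≤ (M * tmax + M * L / c + D + M * (1 + 2*L/(c*tmax)) * Mx + D + 1) * E1^β := by
            apply mul_le_mul_of_nonneg_right _ hEβp.le
            have h1 : 0 ≤ M * tmax := mul_nonneg (by linarith only [hM1]) htmpos.le
            have h2 : 0 ≤ M * L / c :=
              div_nonneg (mul_nonneg (by linarith only [hM1]) (by linarith only [hL1])) hcpos.le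
            linarith only [h1, h2, hD0]
end

section
/- For every g ∈ [0,1]: lim_{K→∞} (2/K)·Σ_{k=1}^{K} (1 − k/(K+1))·𝟙{g ≤ k/(K+1)} = (1−g)², and lim_{K→∞} (2/K)·Σ_{k=1}^{K} (k/(K+1))·𝟙{g > k/(K+1)} = g². (This is the limiting form of the generalized 0–1 loss with equally spaced boundaries π_k = k/(K+1) as the number of boundaries grows, recovering the squared-error theoretical loss of soft classification.) -/
open Filter

private lemma gauss_icc (n : ℕ) : ∑ k ∈ Finset.Icc 1 n, (k : ℝ) = n * (n + 1) / 2 := by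
  induction n with
  | zero => simp
  | succ n ih =>
    rw [Finset.sum_Icc_succ_top (by omega : 1 ≤ n + 1), ih]
    push_cast
    ring

/-- Limiting form of the generalized 0-1 loss with equally spaced boundaries
`π_k = k/(K+1)`: as `K → ∞`, the positive-class loss tends to `(1−g)²` and the
negative-class loss tends to `g²`, recovering the squared-error loss of soft
classification. -/
theorem stmt_19 (g : ℝ) (hg0 : 0 ≤ g) (hg1 : g ≤ 1) :
    Tendsto (fun K : ℕ => (2 / K : ℝ) * ∑ k ∈ Finset.Icc 1 K,
        (1 - (k : ℝ) / (K + 1)) * (if g ≤ (k : ℝ) / (K + 1) then (1 : ℝ) else 0))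
      atTop (nhds ((1 - g) ^ 2))
    ∧ Tendsto (fun K : ℕ => (2 / K : ℝ) * ∑ k ∈ Finset.Icc 1 K,
        ((k : ℝ) / (K + 1)) * (if (k : ℝ) / (K + 1) < g then (1 : ℝ) else 0))
      atTop (nhds (g ^ 2)) := by
  set nn : ℕ → ℕ := fun K => ⌈g * ((K : ℝ) + 1)⌉₊ - 1 with hnn
  have hKpos : ∀ K : ℕ, (0 : ℝ) < (K : ℝ) + 1 := fun K => by positivity
  have hMceil : ∀ K : ℕ, ⌈g * ((K : ℝ) + 1)⌉₊ ≤ K + 1 := by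
    intro K
    apply Nat.ceil_le.mpr
    push_cast
    nlinarith [hKpos K]
  have hnK : ∀ K : ℕ, nn K ≤ K := by
    intro K
    have := hMceil K
    simp only [hnn]
    omega
  -- real bounds on nn
  have hhi : ∀ K : ℕ, (nn K : ℝ) ≤ g * ((K : ℝ) + 1) := by
    intro K
    by_cases h0 : ⌈g * ((K : ℝ) + 1)⌉₊ = 0
    · have h : (nn K : ℝ) = 0 := by simp [hnn, h0]
      rw [h]
      positivity
    · have h1 : 1 ≤ ⌈g * ((K : ℝ) + 1)⌉₊ := Nat.one_le_iff_ne_zero.mpr h0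
      have hcast : (nn K : ℝ) = (⌈g * ((K : ℝ) + 1)⌉₊ : ℝ) - 1 := by
        simp only [hnn]
        push_cast [Nat.cast_sub h1]
        ring
      have hlt : (⌈g * ((K : ℝ) + 1)⌉₊ : ℝ) < g * ((K : ℝ) + 1) + 1 :=
        Nat.ceil_lt_add_one (by positivity)
      linarith
  have hlo : ∀ K : ℕ, g * ((K : ℝ) + 1) - 1 ≤ (nn K : ℝ) := by
    intro K
    by_cases h0 : ⌈g * ((K : ℝ) + 1)⌉₊ = 0
    · have hle : g * ((K : ℝ) + 1) ≤ 0 := Nat.ceil_eq_zero.mp h0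
      have h : (nn K : ℝ) = 0 := by simp [hnn, h0]
      linarith
    · have h1 : 1 ≤ ⌈g * ((K : ℝ) + 1)⌉₊ := Nat.one_le_iff_ne_zero.mpr h0
      have hcast : (nn K : ℝ) = (⌈g * ((K : ℝ) + 1)⌉₊ : ℝ) - 1 := by
        simp only [hnn]
        push_cast [Nat.cast_sub h1]
        ring
      have hle : g * ((K : ℝ) + 1) ≤ (⌈g * ((K : ℝ) + 1)⌉₊ : ℝ) := Nat.le_ceil _
      linarith
  -- limits of nn K / K and (nn K + 1)/(K+1)
  have hdiv : ∀ c : ℝ, Tendsto (fun K : ℕ => c / (K : ℝ)) atTop (nhds 0) :=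
    fun c => Tendsto.div_atTop tendsto_const_nhds tendsto_natCast_atTop_atTop
  have hA : Tendsto (fun K : ℕ => (nn K : ℝ) / (K : ℝ)) atTop (nhds g) := by
    have hlow : Tendsto (fun K : ℕ => g + (g - 1) / (K : ℝ)) atTop (nhds g) := by
      simpa using tendsto_const_nhds.add (hdiv (g - 1))
    have hup : Tendsto (fun K : ℕ => g + g / (K : ℝ)) atTop (nhds g) := by
      simpa using tendsto_const_nhds.add (hdiv g)
    refine tendsto_of_tendsto_of_tendsto_of_le_of_le' hlow hup ?_ ?_
    · filter_upwards [eventually_ge_atTop 1] with K hK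
      have hK0 : (0 : ℝ) < (K : ℝ) := by exact_mod_cast hK
      have h1 : g + (g - 1) / (K : ℝ) = (g * ((K : ℝ) + 1) - 1) / (K : ℝ) := by
        field_simp
        ring
      rw [h1]
      exact div_le_div_of_nonneg_right (hlo K) hK0.le
    · filter_upwards [eventually_ge_atTop 1] with K hK
      have hK0 : (0 : ℝ) < (K : ℝ) := by exact_mod_cast hK
      have h1 : g + g / (K : ℝ) = (g * ((K : ℝ) + 1)) / (K : ℝ) := by
        field_simp
      rw [h1]
      exact div_le_div_of_nonneg_right (hhi K) hK0.le
  have hB : Tendsto (fun K : ℕ => ((nn K : ℝ) + 1) / ((K : ℝ) + 1)) atTop (nhds g) := by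
    have hup : Tendsto (fun K : ℕ => g + 1 / ((K : ℝ) + 1)) atTop (nhds g) := by
      have h : Tendsto (fun K : ℕ => 1 / ((K : ℝ) + 1)) atTop (nhds 0) :=
        Tendsto.div_atTop tendsto_const_nhds
          (tendsto_atTop_add_const_right _ 1 tendsto_natCast_atTop_atTop)
      simpa using tendsto_const_nhds.add h
    refine tendsto_of_tendsto_of_tendsto_of_le_of_le'
      (tendsto_const_nhds : Tendsto (fun _ : ℕ => g) atTop (nhds g)) hup ?_ ?_
    · filter_upwards with K
      rw [le_div_iff₀ (hKpos K)]
      nlinarith [hlo K]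
    · filter_upwards with K
      rw [div_le_iff₀ (hKpos K)]
      have h2 : (1 / ((K : ℝ) + 1)) * ((K : ℝ) + 1) = 1 := by
        field_simp
      nlinarith [hhi K, hKpos K, h2]
  -- the filter identity
  have hfilter : ∀ K : ℕ,
      Finset.filter (fun k : ℕ => (k : ℝ) / ((K : ℝ) + 1) < g) (Finset.Icc 1 K)
        = Finset.Icc 1 (nn K) := by
    intro K
    ext k
    simp only [Finset.mem_filter, Finset.mem_Icc]
    constructor
    · rintro ⟨⟨hk1, hkK⟩, hlt⟩
      refine ⟨hk1, ?_⟩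
      have h : (k : ℝ) < g * ((K : ℝ) + 1) := by
        rw [div_lt_iff₀ (hKpos K)] at hlt
        linarith
      have hkM : k < ⌈g * ((K : ℝ) + 1)⌉₊ := Nat.lt_ceil.mpr h
      simp only [hnn]
      omega
    · rintro ⟨hk1, hkn⟩
      have hkK : k ≤ K := le_trans hkn (hnK K)
      refine ⟨⟨hk1, hkK⟩, ?_⟩
      have hkM : k < ⌈g * ((K : ℝ) + 1)⌉₊ := by
        simp only [hnn] at hkn
        omega
      have h : (k : ℝ) < g * ((K : ℝ) + 1) := Nat.lt_ceil.mp hkM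
      rw [div_lt_iff₀ (hKpos K)]
      linarith
  -- closed forms for the sums
  have hsum2 : ∀ K : ℕ, ∑ k ∈ Finset.Icc 1 K,
      ((k : ℝ) / ((K : ℝ) + 1)) * (if (k : ℝ) / ((K : ℝ) + 1) < g then (1 : ℝ) else 0)
      = (nn K : ℝ) * ((nn K : ℝ) + 1) / (2 * ((K : ℝ) + 1)) := by
    intro K
    have h1 : ∀ k ∈ Finset.Icc 1 K,
        ((k : ℝ) / ((K : ℝ) + 1)) * (if (k : ℝ) / ((K : ℝ) + 1) < g then (1 : ℝ) else 0)
        = (if (k : ℝ) / ((K : ℝ) + 1) < g then (k : ℝ) / ((K : ℝ) + 1) else 0) := by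
      intro k _
      split <;> ring
    have hK1 : ((K : ℝ) + 1) ≠ 0 := ne_of_gt (hKpos K)
    rw [Finset.sum_congr rfl h1, ← Finset.sum_filter, hfilter K, ← Finset.sum_div,
      gauss_icc]
    field_simp
  have hS2 : ∀ K : ℕ, ∑ k ∈ Finset.Icc 1 K,
      (if (k : ℝ) / ((K : ℝ) + 1) < g then (1 : ℝ) else 0) = (nn K : ℝ) := by
    intro K
    rw [Finset.sum_boole, hfilter K]
    simp [Nat.card_Icc]
  have hS3 : ∀ K : ℕ, ∑ k ∈ Finset.Icc 1 K,
      (if (k : ℝ) / ((K : ℝ) + 1) < g then (k : ℝ) / ((K : ℝ) + 1) else 0)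
      = (nn K : ℝ) * ((nn K : ℝ) + 1) / 2 / ((K : ℝ) + 1) := by
    intro K
    rw [← Finset.sum_filter, hfilter K, ← Finset.sum_div, gauss_icc]
  have hsum1 : ∀ K : ℕ, ∑ k ∈ Finset.Icc 1 K,
      (1 - (k : ℝ) / ((K : ℝ) + 1)) * (if g ≤ (k : ℝ) / ((K : ℝ) + 1) then (1 : ℝ) else 0)
      = ((K : ℝ) - (K : ℝ) * ((K : ℝ) + 1) / 2 / ((K : ℝ) + 1))
        - ((nn K : ℝ) - (nn K : ℝ) * ((nn K : ℝ) + 1) / 2 / ((K : ℝ) + 1)) := by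
    intro K
    have h1 : ∀ k ∈ Finset.Icc 1 K,
        (1 - (k : ℝ) / ((K : ℝ) + 1)) * (if g ≤ (k : ℝ) / ((K : ℝ) + 1) then (1 : ℝ) else 0)
        = ((1 : ℝ) - (k : ℝ) / ((K : ℝ) + 1))
          - ((if (k : ℝ) / ((K : ℝ) + 1) < g then (1 : ℝ) else 0)
            - (if (k : ℝ) / ((K : ℝ) + 1) < g then (k : ℝ) / ((K : ℝ) + 1) else 0)) := by
      intro k _
      rcases lt_or_ge ((k : ℝ) / ((K : ℝ) + 1)) g with h | h
      · rw [if_pos h, if_pos h, if_neg (not_le.mpr h)]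
        ring
      · rw [if_neg (not_lt.mpr h), if_neg (not_lt.mpr h), if_pos h]
        ring
    rw [Finset.sum_congr rfl h1, Finset.sum_sub_distrib, Finset.sum_sub_distrib,
      Finset.sum_sub_distrib, Finset.sum_const, hS2 K, hS3 K, ← Finset.sum_div, gauss_icc]
    simp [Nat.card_Icc]
  -- conclude
  have hprod : Tendsto (fun K : ℕ =>
      ((nn K : ℝ) / (K : ℝ)) * (((nn K : ℝ) + 1) / ((K : ℝ) + 1)))
      atTop (nhds (g * g)) := hA.mul hB
  constructor
  · have hlim : Tendsto (fun K : ℕ => 1 - 2 * ((nn K : ℝ) / (K : ℝ))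
        + ((nn K : ℝ) / (K : ℝ)) * (((nn K : ℝ) + 1) / ((K : ℝ) + 1)))
        atTop (nhds ((1 - g) ^ 2)) := by
      have h : (1 - g) ^ 2 = 1 - 2 * g + g * g := by ring
      rw [h]
      exact (tendsto_const_nhds.sub ((hA.const_mul 2))).add hprod
    refine hlim.congr' ?_
    filter_upwards [eventually_ge_atTop 1] with K hK
    have hK0 : (K : ℝ) ≠ 0 := by
      have : (0 : ℝ) < (K : ℝ) := by exact_mod_cast hK
      linarith
    have hK1 : ((K : ℝ) + 1) ≠ 0 := ne_of_gt (hKpos K)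
    rw [hsum1 K]
    field_simp
    ring
  · have hlim : Tendsto (fun K : ℕ =>
        ((nn K : ℝ) / (K : ℝ)) * (((nn K : ℝ) + 1) / ((K : ℝ) + 1)))
        atTop (nhds (g ^ 2)) := by
      rw [sq]
      exact hprod
    refine hlim.congr' ?_
    filter_upwards [eventually_ge_atTop 1] with K hK
    have hK0 : (K : ℝ) ≠ 0 := by
      have : (0 : ℝ) < (K : ℝ) := by exact_mod_cast hK
      linarith
    have hK1 : ((K : ℝ) + 1) ≠ 0 := ne_of_gt (hKpos K)
    rw [hsum2 K]
    field_simp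
end
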